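/- Let Q be any n×n symmetric complex matrix. Then rank(Q) ≤ min over all vertex subsets S of G(Q) of (n − |S| + |N(S)|). In particular, every non-expanding set of rows of Q is linearly dependent. -/

import Mathlib

open MeasureTheory Finset

attribute [local instance] Classical.propDecidable

set_option maxHeartbeats 800000

noncomputable section RankSparse

/-- Bernoulli measure on `Bool` with success probability `p`. -/
def bern (p : ℝ) : Measure Bool :=
  (Real.toNNReal p) • Measure.dirac true + (Real.toNNReal (1 - p)) • Measure.dirac false

instance (p : ℝ) : IsFiniteMeasure (bern p) := by unfold bern; infer_instance

/-- Product measure: i.i.d. Bernoulli(p) entries indexed by pairs `(i,j)`. -/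
def entriesMeasure (n : ℕ) (p : ℝ) : Measure (Fin n → Fin n → Bool) :=
  Measure.pi fun _ => Measure.pi fun _ => bern p

/-- The random sparsified symmetric matrix `Q(W,p)`: for `i ≤ j`,
`q_{ij} = w_{ij} ξ_{ij}` with `ξ_{ij}` Bernoulli, and `q_{ji} = q_{ij}`. -/
def QW {n : ℕ} (W : Matrix (Fin n) (Fin n) ℂ) (ω : Fin n → Fin n → Bool) :
    Matrix (Fin n) (Fin n) ℂ :=
  Matrix.of fun i j =>
    if i ≤ j then (if ω i j then W i j else 0) else (if ω j i then W j i else 0)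

/-- The adjacency relation of the graph `G(Q)` of a symmetric matrix:
`i` adjacent to `j` iff `q_{ij} ≠ 0` (self-loops allowed). -/
def adjOf {n : ℕ} (Q : Matrix (Fin n) (Fin n) ℂ) : Fin n → Fin n → Prop :=
  fun i j => Q i j ≠ 0

/-- The neighborhood `N(S)` of a vertex set: all vertices adjacent to at
least one vertex of `S` (may intersect `S`). -/
def nbr {n : ℕ} (A : Fin n → Fin n → Prop) (S : Finset (Fin n)) : Finset (Fin n) :=
  univ.filter fun v => ∃ u ∈ S, A u v

/-- `S` is non-expanding if `|N(S)| < |S|`. -/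
def nonExpanding {n : ℕ} (A : Fin n → Fin n → Prop) (S : Finset (Fin n)) : Prop :=
  (nbr A S).card < S.card

/-- Minimally non-expanding: non-expanding with no proper non-expanding subset. -/
def minNonExpanding {n : ℕ} (A : Fin n → Fin n → Prop) (S : Finset (Fin n)) : Prop :=
  nonExpanding A S ∧ ∀ T ⊂ S, ¬ nonExpanding A T

/-- Degree of a vertex: number of its neighbors (a loop makes `v` its own neighbor). -/
def deg {n : ℕ} (A : Fin n → Fin n → Prop) (v : Fin n) : ℕ :=
  (univ.filter fun u => A v u).card

/-- A set is unobstructed if it contains no non-expanding subset. -/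
def unobstructed {n : ℕ} (A : Fin n → Fin n → Prop) (S : Finset (Fin n)) : Prop :=
  ∀ T ⊆ S, ¬ nonExpanding A T

/-- A set is `t`-unobstructed if it contains no non-expanding subset of size at most `t`. -/
def tUnobstructed {n : ℕ} (t : ℕ) (A : Fin n → Fin n → Prop) (S : Finset (Fin n)) : Prop :=
  ∀ T ⊆ S, T.card ≤ t → ¬ nonExpanding A T

/-- Maximum size of an unobstructed vertex set. -/
def maxUnobstructed {n : ℕ} (A : Fin n → Fin n → Prop) : ℕ :=
  ((univ : Finset (Finset (Fin n))).filter fun S => unobstructed A S).sup Finset.card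

/-- Maximum size of a `t`-unobstructed vertex set. -/
def maxTUnobstructed {n : ℕ} (t : ℕ) (A : Fin n → Fin n → Prop) : ℕ :=
  ((univ : Finset (Finset (Fin n))).filter fun S => tUnobstructed t A S).sup Finset.card

/-- A symmetric matrix is `t`-saturated if its rank equals the maximum size of a
`t`-unobstructed set of vertices of its graph. -/
def saturated (t : ℕ) {n : ℕ} (Q : Matrix (Fin n) (Fin n) ℂ) : Prop :=
  Q.rank = maxTUnobstructed t (adjOf Q)

/-- `min_{S} (n - |S| + |N(S)|)` over all vertex subsets of `G(Q)`. -/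
def rankFormula {n : ℕ} (Q : Matrix (Fin n) (Fin n) ℂ) : ℕ :=
  (univ : Finset (Finset (Fin n))).inf' univ_nonempty
    fun S => n - S.card + (nbr (adjOf Q) S).card

/-- The induced graph on the vertex set `S` is connected. -/
def connOn {n : ℕ} (A : Fin n → Fin n → Prop) (S : Finset (Fin n)) : Prop :=
  ∀ u ∈ S, ∀ v ∈ S, Relation.ReflTransGen (fun a b => a ∈ S ∧ b ∈ S ∧ A a b) u v

/-- There is a cycle of length `ℓ` through `v` (a cycle of length 1 is a self-loop). -/
def cycleThrough {n : ℕ} (A : Fin n → Fin n → Prop) (ℓ : ℕ) (v : Fin n) : Prop :=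
  ∃ f : ZMod ℓ → Fin n, Function.Injective f ∧ (∀ i, A (f i) (f (i + 1))) ∧ ∃ i, f i = v

/-- Well-separated graph (for parameters `N`, the ambient size, and `s`):
(W1) every connected subgraph on at most `5s` vertices has at most `s-1` vertices of
degree at most `ln ln N`; (W2) no cycle of length 1 or of length between 3 and `12 s`
contains a vertex of degree at most `ln ln N`. -/
def wellSeparated (N s : ℕ) {n : ℕ} (A : Fin n → Fin n → Prop) : Prop :=
  (∀ S : Finset (Fin n), S.card ≤ 5 * s → connOn A S →
      (S.filter fun v => (deg A v : ℝ) ≤ Real.log (Real.log N)).card ≤ s - 1) ∧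
  (∀ v : Fin n, (deg A v : ℝ) ≤ Real.log (Real.log N) →
      ∀ ℓ : ℕ, (ℓ = 1 ∨ (3 ≤ ℓ ∧ ℓ ≤ 12 * s)) → ¬ cycleThrough A ℓ v)

/-- Number of edges joining `S` to its complement. -/
def crossEdges {n : ℕ} (A : Fin n → Fin n → Prop) (S : Finset (Fin n)) : ℕ :=
  (univ.filter fun e : Fin n × Fin n => e.1 ∈ S ∧ e.2 ∉ S ∧ A e.1 e.2).card

/-- Small set expander (for ambient size `N` and parameter `s`). -/
def smallSetExpander (N s : ℕ) {n : ℕ} (A : Fin n → Fin n → Prop) : Prop :=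
  ∀ S : Finset (Fin n), (S.card : ℝ) ≤ (N : ℝ) / (Real.log N) ^ ((3:ℝ)/2) →
    (S.card ≤ crossEdges A S ∨
      ∃ S' ⊆ S, S'.card ≤ s - 1 ∧ crossEdges A S' < S'.card)

/-- Number of edges induced on `S` (counting loops once). -/
def inducedEdges {n : ℕ} (A : Fin n → Fin n → Prop) (S : Finset (Fin n)) : ℕ :=
  (univ.filter fun e : Fin n × Fin n => e.1 ∈ S ∧ e.2 ∈ S ∧ e.1 ≤ e.2 ∧ A e.1 e.2).card

/-- Locally sparse: every nonempty set of at most `N/(ln N)^{3/2}` vertices induces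
fewer than `4|S|` edges (i.e. has average degree less than 8). -/
def locallySparse (N : ℕ) {n : ℕ} (A : Fin n → Fin n → Prop) : Prop :=
  ∀ S : Finset (Fin n), S.Nonempty → (S.card : ℝ) ≤ (N : ℝ) / (Real.log N) ^ ((3:ℝ)/2) →
    inducedEdges A S < 4 * S.card

/-- `S` is nice: at least two vertices are each adjacent to exactly one vertex of `S`. -/
def nice {n : ℕ} (A : Fin n → Fin n → Prop) (S : Finset (Fin n)) : Prop :=
  2 ≤ (univ.filter fun v => (S.filter fun u => A v u).card = 1).card

/-- `S` is nearly nice: at least one vertex is adjacent to exactly one vertex of `S`. -/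
def nearlyNice {n : ℕ} (A : Fin n → Fin n → Prop) (S : Finset (Fin n)) : Prop :=
  1 ≤ (univ.filter fun v => (S.filter fun u => A v u).card = 1).card

/-- A good graph (for ambient size `N`, parameter `s` and probability `p`; here
`k = ln ln N / (2p)`). -/
def goodGraph (N s : ℕ) (p : ℝ) {n : ℕ} (A : Fin n → Fin n → Prop) : Prop :=
  (∀ S : Finset (Fin n), S.Nonempty → ¬ nice A S → (∀ T ⊂ S, T.Nonempty → nice A T) →
      (Real.log (Real.log N) / (2 * p) + 1 ≤ (S.card : ℝ) ∨
        ∃ T ⊆ S, T.card ≤ s - 1 ∧ nonExpanding A T)) ∧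
  (∀ S : Finset (Fin n), S.Nonempty → ¬ nearlyNice A S →
      (∀ T ⊂ S, T.Nonempty → nearlyNice A T) →
      (Real.log (Real.log N) / (2 * p) + 1 ≤ (S.card : ℝ) ∨
        (S.card ≤ s - 1 ∧ nonExpanding A S))) ∧
  (((univ.filter fun v : Fin n => deg A v < s).card : ℝ) ≤ 1 / (p * Real.log N)) ∧
  wellSeparated N s A

/-- A symmetric matrix is good if its graph is good. -/
def goodMatrix (N s : ℕ) (p : ℝ) {n : ℕ} (Q : Matrix (Fin n) (Fin n) ℂ) : Prop :=
  goodGraph N s p (adjOf Q)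

/-- The upper-left `min m n × min m n` minor of a matrix. -/
def minor {n : ℕ} (Q : Matrix (Fin n) (Fin n) ℂ) (m : ℕ) :
    Matrix (Fin (min m n)) (Fin (min m n)) ℂ :=
  Q.submatrix (Fin.castLE (min_le_right m n)) (Fin.castLE (min_le_right m n))

end RankSparse

noncomputable section AuxRank
open Submodule Module

/-- The submodule of functions vanishing off `N`. -/
def suppOn {n : ℕ} (N : Finset (Fin n)) : Submodule ℂ (Fin n → ℂ) where
  carrier := {v | ∀ j ∉ N, v j = 0}
  add_mem' := fun ha hb j hj => by simp [ha j hj, hb j hj]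
  zero_mem' := fun j hj => rfl
  smul_mem' := fun c v hv j hj => by simp [hv j hj]

lemma mem_suppOn {n : ℕ} {N : Finset (Fin n)} {v : Fin n → ℂ} :
    v ∈ suppOn N ↔ ∀ j ∉ N, v j = 0 := Iff.rfl

lemma row_mem_suppOn {n : ℕ} (Q : Matrix (Fin n) (Fin n) ℂ) (S : Finset (Fin n))
    {i : Fin n} (hi : i ∈ S) : Q i ∈ suppOn (nbr (adjOf Q) S) := by
  intro j hj
  by_contra h
  refine hj ?_
  simp only [nbr, Finset.mem_filter, Finset.mem_univ, true_and]
  exact ⟨i, hi, h⟩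

lemma finrank_suppOn_le {n : ℕ} (N : Finset (Fin n)) :
    finrank ℂ (suppOn N) ≤ N.card := by
  classical
  have hinj : Function.Injective
      ((LinearMap.funLeft ℂ ℂ (Subtype.val : {j // j ∈ N} → Fin n)).domRestrict (suppOn N)) := by
    intro x y hxy
    apply Subtype.ext
    funext j
    by_cases hj : j ∈ N
    · have := congrFun hxy ⟨j, hj⟩
      simpa [LinearMap.domRestrict_apply, LinearMap.funLeft_apply] using this
    · rw [x.2 j hj, y.2 j hj]
  calc finrank ℂ (suppOn N) ≤ finrank ℂ ({j // j ∈ N} → ℂ) :=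
        LinearMap.finrank_le_finrank_of_injective hinj
    _ = N.card := by rw [Module.finrank_fintype_fun_eq_card, Fintype.card_coe]

end AuxRank

/-- For any `n × n` symmetric complex matrix `Q`,
`rank Q ≤ min_{S ⊆ V(G(Q))} (n - |S| + |N(S)|)`; in particular every
non-expanding set of rows of `Q` is linearly dependent. -/
theorem rank_le_rankFormula {n : ℕ} (Q : Matrix (Fin n) (Fin n) ℂ) (hQ : Q.IsSymm) :
    Q.rank ≤ rankFormula Q ∧
    ∀ S : Finset (Fin n), nonExpanding (adjOf Q) S →
      ¬ LinearIndependent ℂ (fun i : S => Q i) := by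
  classical
  constructor
  · apply Finset.le_inf'
    intro S _
    set N := nbr (adjOf Q) S with hN
    rw [Matrix.rank_eq_finrank_span_row]
    show Module.finrank ℂ (Submodule.span ℂ (Set.range Q)) ≤ _
    have hsub : Set.range Q ⊆
        ↑(Submodule.span ℂ (Q '' ↑Sᶜ) ⊔ Submodule.span ℂ (Q '' ↑S)) := by
      rintro _ ⟨i, rfl⟩
      by_cases hi : i ∈ S
      · exact Submodule.mem_sup_right (Submodule.subset_span ⟨i, hi, rfl⟩)
      · exact Submodule.mem_sup_left (Submodule.subset_span ⟨i, by simp [hi], rfl⟩)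
    have h1 := Submodule.finrank_mono (Submodule.span_le.mpr hsub)
    have h2 := Submodule.finrank_add_le_finrank_add_finrank
      (Submodule.span ℂ (Q '' ↑Sᶜ)) (Submodule.span ℂ (Q '' ↑S))
    have h3 : Module.finrank ℂ (Submodule.span ℂ (Q '' ↑Sᶜ)) ≤ n - S.card := by
      haveI : Fintype ↑(Q '' ↑Sᶜ) := Set.fintypeImage (f := (Q : Fin n → Fin n → ℂ)) _
      refine (finrank_span_le_card _).trans ?_
      calc (Q '' ↑Sᶜ).toFinset.card ≤ (↑Sᶜ : Set (Fin n)).toFinset.card := by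
            rw [Set.toFinset_card, Set.toFinset_card]; exact Fintype.card_le_of_surjective _ Set.imageFactorization_surjective
        _ = n - S.card := by simp [Finset.card_compl]
    have h4 : Module.finrank ℂ (Submodule.span ℂ (Q '' ↑S)) ≤ N.card := by
      refine le_trans (Submodule.finrank_mono ?_) (finrank_suppOn_le N)
      rw [Submodule.span_le]
      rintro _ ⟨i, hi, rfl⟩
      exact row_mem_suppOn Q S hi
    omega
  · intro S hS hLI
    set N := nbr (adjOf Q) S with hN
    set L := LinearMap.funLeft ℂ ℂ (Subtype.val : {j // j ∈ N} → Fin n) with hL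
    have hdisj : Disjoint (Submodule.span ℂ (Set.range fun i : S => Q i))
        (LinearMap.ker L) := by
      rw [Submodule.disjoint_def]
      intro x hx hker
      have hxs : x ∈ suppOn N := by
        refine Submodule.span_le.mpr ?_ hx
        rintro _ ⟨i, rfl⟩
        exact row_mem_suppOn Q S i.2
      funext j
      by_cases hj : j ∈ N
      · have := congrFun (LinearMap.mem_ker.mp hker) ⟨j, hj⟩
        simpa [hL, LinearMap.funLeft_apply] using this
      · exact hxs j hj
    have hmap := hLI.map (f := L) hdisj
    have hcard := hmap.fintype_card_le_finrank
    rw [Module.finrank_fintype_fun_eq_card, Fintype.card_coe, Fintype.card_coe] at hcard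
    exact absurd hcard (by exact Nat.not_le.mpr hS)
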